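/- (Identity of Merca) For variables x_1,…,x_n and scalars a_1,…,a_n: ∑_{k=1}^n a_k x_k/(1−x_k) = (∏_{k=1}^n 1/(1−x_k)) · ∑_{k=1}^n ∑_{1≤i_1<…<i_k≤n} (−1)^{k−1}(a_{i_1}+⋯+a_{i_k}) x_{i_1}⋯x_{i_k}. -/

import Mathlib

open Finset

lemma prod_one_sub_eq (s : Finset ℕ) (x : ℕ → ℂ) :
    ∏ j ∈ s, (1 - x j) = ∑ T ∈ s.powerset, (-1 : ℂ) ^ T.card * ∏ i ∈ T, x i := by
  have h := Finset.prod_add (fun i => (-1 : ℂ) * x i) (fun _ => (1 : ℂ)) s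
  simp only [Finset.prod_const_one, mul_one, Finset.prod_mul_distrib,
    Finset.prod_const] at h
  calc ∏ j ∈ s, (1 - x j) = ∏ j ∈ s, ((-1) * x j + 1) :=
        Finset.prod_congr rfl (fun j _ => by ring)
    _ = _ := h

lemma merca_aux (s : Finset ℕ) (x a : ℕ → ℂ) :
    ∑ k ∈ s, a k * x k * ∏ j ∈ s.erase k, (1 - x j) =
      ∑ S ∈ s.powerset, -(-1 : ℂ) ^ S.card * (∑ i ∈ S, a i) * ∏ i ∈ S, x i := by
  classical
  induction s using Finset.induction_on with
  | empty => simp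
  | @insert i s hi ih =>
    rw [Finset.sum_insert hi, Finset.erase_insert hi,
      Finset.sum_powerset_insert hi]
    have h1 : ∀ k ∈ s, a k * x k * ∏ j ∈ (insert i s).erase k, (1 - x j)
        = (1 - x i) * (a k * x k * ∏ j ∈ s.erase k, (1 - x j)) := by
      intro k hk
      have hne : i ≠ k := fun h => hi (h ▸ hk)
      rw [Finset.erase_insert_of_ne hne,
        Finset.prod_insert (fun h => hi (Finset.mem_of_mem_erase h))]
      ring
    rw [Finset.sum_congr rfl h1, ← Finset.mul_sum, ih]
    have h2 : ∀ T ∈ s.powerset,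
        -(-1 : ℂ) ^ (insert i T).card * (∑ j ∈ insert i T, a j) * ∏ j ∈ insert i T, x j
        = a i * x i * ((-1 : ℂ) ^ T.card * ∏ j ∈ T, x j)
          + (-x i) * (-(-1 : ℂ) ^ T.card * (∑ j ∈ T, a j) * ∏ j ∈ T, x j) := by
      intro T hT
      have hiT : i ∉ T := fun h => hi (Finset.mem_powerset.mp hT h)
      rw [Finset.card_insert_of_notMem hiT, Finset.sum_insert hiT,
        Finset.prod_insert hiT, pow_succ]
      ring
    rw [Finset.sum_congr rfl h2, Finset.sum_add_distrib, ← Finset.mul_sum,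
      ← Finset.mul_sum, ← prod_one_sub_eq]
    ring

/-- Merca's identity: for complex numbers x_1,…,x_n (with x_k ≠ 1) and
scalars a_1,…,a_n,
`∑_{k=1}^n a_k x_k/(1−x_k)
  = (∏_{k=1}^n 1/(1−x_k)) ∑_{∅ ≠ S ⊆ {1,…,n}} (−1)^{|S|−1} (∑_{i∈S} a_i) ∏_{i∈S} x_i`. -/
theorem merca_identity (n : ℕ) (x a : ℕ → ℂ) (hx : ∀ k ∈ Finset.range n, x k ≠ 1) :
    ∑ k ∈ Finset.range n, a k * x k / (1 - x k) =
      (∏ k ∈ Finset.range n, (1 - x k))⁻¹ *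
        ∑ S ∈ (Finset.range n).powerset.filter (fun S => S.Nonempty),
          (-1 : ℂ) ^ (S.card - 1) * (∑ i ∈ S, a i) * ∏ i ∈ S, x i := by
  classical
  have hx0 : ∀ k ∈ Finset.range n, (1 : ℂ) - x k ≠ 0 := by
    intro k hk h
    exact hx k hk (by linear_combination -h)
  -- drop the filter (empty set contributes 0)
  have hfilter :
      ∑ S ∈ (Finset.range n).powerset.filter (fun S => S.Nonempty),
          (-1 : ℂ) ^ (S.card - 1) * (∑ i ∈ S, a i) * ∏ i ∈ S, x i
        = ∑ S ∈ (Finset.range n).powerset,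
          (-1 : ℂ) ^ (S.card - 1) * (∑ i ∈ S, a i) * ∏ i ∈ S, x i := by
    apply Finset.sum_filter_of_ne
    intro S _ hS
    by_contra hne
    rw [Finset.not_nonempty_iff_eq_empty] at hne
    subst hne
    simp at hS
  -- change the sign convention
  have hsign :
      ∑ S ∈ (Finset.range n).powerset,
          (-1 : ℂ) ^ (S.card - 1) * (∑ i ∈ S, a i) * ∏ i ∈ S, x i
        = ∑ S ∈ (Finset.range n).powerset,
          -(-1 : ℂ) ^ S.card * (∑ i ∈ S, a i) * ∏ i ∈ S, x i := by
    apply Finset.sum_congr rfl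
    intro S _
    rcases Finset.eq_empty_or_nonempty S with h | h
    · subst h; simp
    · obtain ⟨m, hm⟩ : ∃ m, S.card = m + 1 :=
        ⟨S.card - 1, (Nat.succ_pred_eq_of_pos (Finset.card_pos.mpr h)).symm⟩
      rw [hm, Nat.add_sub_cancel, pow_succ]
      ring
  rw [hfilter, hsign, ← merca_aux, Finset.mul_sum]
  apply Finset.sum_congr rfl
  intro k hk
  have hQ : ∏ j ∈ (Finset.range n).erase k, (1 - x j) ≠ 0 :=
    Finset.prod_ne_zero_iff.mpr (fun j hj => hx0 j (Finset.mem_of_mem_erase hj))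
  rw [← Finset.mul_prod_erase _ _ hk, mul_inv]
  field_simp [hx0 k hk]
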